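/- Let A, B, D, E ∈ ℂ satisfy Im(A·conj(D) + B·conj(E)) = 0, and define z₁,…,z₅ : ℝ → ℂ³ by z₁(t) = z₂(t) = (e^{it}, −i e^{−it}, 0), z₃(t) = (0, 0, 1), z₄(t) = (D e^{it/2} + E e^{−it/2}, −i conj(D) e^{−it/2} + i conj(E) e^{it/2}, 2A e^{−it/2} − 2 conj(A) e^{it/2} − (2/3) B e^{−3it/2} − (2/3) conj(B) e^{3it/2}), z₅(t) = (A e^{it/2} + B e^{−it/2}, i conj(A) e^{−it/2} − i conj(B) e^{it/2}, 0). Then for all t ∈ ℝ: (i) ω(z₂,z₃) = ω(z₁,z₃) = ω(z₁,z₂) = 0, ω(z₁,z₅) + ω(z₂,z₅) − ω(z₃,z₄) = 0, −ω(z₁,z₄) + ω(z₂,z₄) + ω(z₃,z₅) = 0, ω(z₄,z₅) = 0; and (ii) dz₁/dt = 2 z₂×z₃, dz₂/dt = 2 z₁×z₃, dz₃/dt = −2 z₁×z₂, dz₄/dt = z₁×z₅ + z₂×z₅ − z₃×z₄, dz₅/dt = −z₁×z₄ + z₂×z₄ + z₃×z₅. -/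

import Mathlib

noncomputable section

open Complex ComplexConjugate

/-- ℂ³ as triples of complex numbers. -/
abbrev C3 := ℂ × ℂ × ℂ

/-- The standard Kähler form ω(u,v) = Σ Im(conj(u_j)·v_j). -/
def omega3 (u v : C3) : ℝ :=
  (conj u.1 * v.1).im + (conj u.2.1 * v.2.1).im + (conj u.2.2 * v.2.2).im

/-- The antibilinear cross product on ℂ³. -/
def cross3 (u v : C3) : C3 :=
  ((1/2 : ℂ) * conj (u.2.1 * v.2.2 - u.2.2 * v.2.1),
   (1/2 : ℂ) * conj (u.2.2 * v.1 - u.1 * v.2.2),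
   (1/2 : ℂ) * conj (u.1 * v.2.1 - u.2.1 * v.1))

/-- z₁(t) = z₂(t) = (e^{it}, −i e^{−it}, 0). -/
def z12 (t : ℝ) : C3 :=
  (Complex.exp (Complex.I * t), -Complex.I * Complex.exp (-(Complex.I * t)), 0)

/-- z₃(t) = (0,0,1). -/
def z3c (_t : ℝ) : C3 := (0, 0, 1)

/-- z₄(t). -/
def z4c (A B D E : ℂ) (t : ℝ) : C3 :=
  (D * Complex.exp (Complex.I * t / 2) + E * Complex.exp (-(Complex.I * t / 2)),
   -Complex.I * conj D * Complex.exp (-(Complex.I * t / 2))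
     + Complex.I * conj E * Complex.exp (Complex.I * t / 2),
   2 * A * Complex.exp (-(Complex.I * t / 2)) - 2 * conj A * Complex.exp (Complex.I * t / 2)
     - (2/3 : ℂ) * B * Complex.exp (-(3 * Complex.I * t / 2))
     - (2/3 : ℂ) * conj B * Complex.exp (3 * Complex.I * t / 2))

/-- z₅(t). -/
def z5c (A B : ℂ) (t : ℝ) : C3 :=
  (A * Complex.exp (Complex.I * t / 2) + B * Complex.exp (-(Complex.I * t / 2)),
   Complex.I * conj A * Complex.exp (-(Complex.I * t / 2))
     - Complex.I * conj B * Complex.exp (Complex.I * t / 2),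
   0)

lemma hde (c : ℂ) (t : ℝ) : HasDerivAt (fun s : ℝ => Complex.exp (c * s)) (c * Complex.exp (c * t)) t := by
  have h1 : HasDerivAt (fun s : ℝ => c * (s:ℂ)) c t := by
    simpa using (Complex.ofRealCLM.hasDerivAt (x := t)).const_mul c
  simpa [mul_comm] using h1.cexp

lemma hce (t : ℝ) : conj (Complex.exp (Complex.I * t / 2)) = Complex.exp (-(Complex.I * t / 2)) := by
  rw [← Complex.exp_conj]; congr 1; simp [map_div₀, map_ofNat]; ring

lemma hcf (t : ℝ) : conj (Complex.exp (-(Complex.I * t / 2))) = Complex.exp (Complex.I * t / 2) := by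
  rw [← Complex.exp_conj]; congr 1; simp [map_div₀, map_ofNat]; ring

lemma hef (t : ℝ) : Complex.exp (Complex.I * t / 2) * Complex.exp (-(Complex.I * t / 2)) = 1 := by
  rw [← Complex.exp_add]; ring_nf; exact Complex.exp_zero

lemma h2 (t : ℝ) : Complex.exp (Complex.I * t) = Complex.exp (Complex.I * t / 2) * Complex.exp (Complex.I * t / 2) := by
  rw [← Complex.exp_add]; ring_nf

lemma h2' (t : ℝ) : Complex.exp (-(Complex.I * t)) = Complex.exp (-(Complex.I * t / 2)) * Complex.exp (-(Complex.I * t / 2)) := by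
  rw [← Complex.exp_add]; ring_nf

lemma h3 (t : ℝ) : Complex.exp (3 * Complex.I * t / 2) = Complex.exp (Complex.I * t / 2) * Complex.exp (Complex.I * t / 2) * Complex.exp (Complex.I * t / 2) := by
  rw [← Complex.exp_add, ← Complex.exp_add]; ring_nf

lemma h3' (t : ℝ) : Complex.exp (-(3 * Complex.I * t / 2)) = Complex.exp (-(Complex.I * t / 2)) * Complex.exp (-(Complex.I * t / 2)) * Complex.exp (-(Complex.I * t / 2)) := by
  rw [← Complex.exp_add, ← Complex.exp_add]; ring_nf

set_option maxHeartbeats 1000000 in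
theorem statement_7
    (A B D E : ℂ) (h : (A * conj D + B * conj E).im = 0) :
    (∀ t : ℝ,
      omega3 (z12 t) (z3c t) = 0 ∧
      omega3 (z12 t) (z3c t) = 0 ∧
      omega3 (z12 t) (z12 t) = 0 ∧
      omega3 (z12 t) (z5c A B t) + omega3 (z12 t) (z5c A B t)
        - omega3 (z3c t) (z4c A B D E t) = 0 ∧
      -omega3 (z12 t) (z4c A B D E t) + omega3 (z12 t) (z4c A B D E t)
        + omega3 (z3c t) (z5c A B t) = 0 ∧
      omega3 (z4c A B D E t) (z5c A B t) = 0) ∧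
    (∀ t : ℝ,
      HasDerivAt z12 ((2:ℝ) • cross3 (z12 t) (z3c t)) t ∧
      HasDerivAt z12 ((2:ℝ) • cross3 (z12 t) (z3c t)) t ∧
      HasDerivAt z3c ((-2:ℝ) • cross3 (z12 t) (z12 t)) t ∧
      HasDerivAt (z4c A B D E)
        (cross3 (z12 t) (z5c A B t) + cross3 (z12 t) (z5c A B t)
          - cross3 (z3c t) (z4c A B D E t)) t ∧
      HasDerivAt (z5c A B)
        (-cross3 (z12 t) (z4c A B D E t) + cross3 (z12 t) (z4c A B D E t)
          + cross3 (z3c t) (z5c A B t)) t) := by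
  have hh : conj A * D + conj B * E = A * conj D + B * conj E := by
    have := Complex.conj_eq_iff_im.mpr h
    simpa [map_add, map_mul] using this
  constructor
  · intro t
    refine ⟨?_, ?_, ?_, ?_, ?_, ?_⟩
    · simp [omega3, z12, z3c]
    · simp [omega3, z12, z3c]
    · simp [omega3, z12, Complex.conj_mul', ← Complex.ofReal_pow]
      ring
    · simp only [omega3, z12, z3c, z4c, z5c, h2 t, h2' t, h3 t, h3' t]
      simp only [← Complex.add_im, ← Complex.sub_im, ← Complex.neg_im]
      rw [← Complex.conj_eq_iff_im]
      simp only [map_add, map_sub, map_mul, map_neg, Complex.conj_conj, hce t, hcf t, map_ofNat,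
        map_div₀, Complex.conj_I, map_one, map_zero]
      set e := Complex.exp (Complex.I * t / 2) with hE
      set f := Complex.exp (-(Complex.I * t / 2)) with hF
      have hEF : e * f = 1 := hef t
      linear_combination (4*e*conj A - 4*f*A) * hEF
        + (2*e*f^2*A - 2*e^2*f*conj A + 2*e^3*conj B - 2*f^3*B) * Complex.I_sq
    · simp only [omega3, z12, z3c, z5c]
      simp [Complex.mul_im]
      ring
    · simp only [omega3, z4c, z5c, h2 t, h2' t, h3 t, h3' t]
      simp only [← Complex.add_im, ← Complex.sub_im, ← Complex.neg_im]
      rw [← Complex.conj_eq_iff_im]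
      simp only [map_add, map_sub, map_mul, map_neg, Complex.conj_conj, hce t, hcf t, map_ofNat,
        map_div₀, Complex.conj_I, map_one, map_zero]
      set e := Complex.exp (Complex.I * t / 2) with hE
      set f := Complex.exp (-(Complex.I * t / 2)) with hF
      have hEF : e * f = 1 := hef t
      linear_combination (2*(conj A * D + conj B * E - A * conj D - B * conj E)) * hEF
        + 2 * hh
        + (-(D*e*f*conj A) + D*e^2*conj B - E*e*f*conj B + e*f*conj D*A + e*f*conj E*B
            - e^2*conj E*A + E*f^2*conj A - f^2*conj D*B) * Complex.I_sq
  · intro t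
    have d12 : HasDerivAt z12
        ((Complex.I * Complex.exp (Complex.I * t),
          -Complex.I * -(Complex.I * Complex.exp (-(Complex.I * t))), 0) : C3) t := by
      have a1 := hde Complex.I t
      have a2' := hde (-Complex.I) t
      simp only [neg_mul] at a2'
      have a2 := a2'.const_mul (-Complex.I)
      exact HasDerivAt.prodMk a1 (HasDerivAt.prodMk a2 (hasDerivAt_const t (0:ℂ)))
    have dz12goal : HasDerivAt z12 ((2:ℝ) • cross3 (z12 t) (z3c t)) t := by
      have heq : ((2:ℝ) • cross3 (z12 t) (z3c t) : C3)
          = (Complex.I * Complex.exp (Complex.I * t),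
             -Complex.I * -(Complex.I * Complex.exp (-(Complex.I * t))), 0) := by
        refine Prod.ext ?_ (Prod.ext ?_ ?_) <;>
          simp only [cross3, z12, z3c, Prod.smul_mk, Prod.smul_fst, Prod.smul_snd,
            map_sub, map_mul, map_neg, Complex.conj_conj, Complex.conj_I, map_zero,
            map_one, h2 t, h2' t, hce t, hcf t, mul_zero, zero_mul, mul_one, one_mul,
            sub_zero, zero_sub, smul_zero, Complex.real_smul, Complex.ofReal_ofNat] <;>
          set f := Complex.exp (-(Complex.I * t / 2)) with hF <;>
          first
            | ring1
            | linear_combination (-(f^2)) * Complex.I_sq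
            | linear_combination (f^2) * Complex.I_sq
      rw [heq]; exact d12
    refine ⟨dz12goal, dz12goal, ?_, ?_, ?_⟩
    · have heq : ((-2:ℝ) • cross3 (z12 t) (z12 t) : C3) = 0 := by
        simp [cross3, Prod.ext_iff, mul_comm]
      rw [heq]
      exact hasDerivAt_const t _
    · have d4 : HasDerivAt (z4c A B D E)
          ((D * (Complex.I/2 * Complex.exp (Complex.I * t / 2))
              + E * (-(Complex.I/2) * Complex.exp (-(Complex.I * t / 2))),
            -Complex.I * conj D * (-(Complex.I/2) * Complex.exp (-(Complex.I * t / 2)))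
              + Complex.I * conj E * (Complex.I/2 * Complex.exp (Complex.I * t / 2)),
            2 * A * (-(Complex.I/2) * Complex.exp (-(Complex.I * t / 2)))
              - 2 * conj A * (Complex.I/2 * Complex.exp (Complex.I * t / 2))
              - (2/3 : ℂ) * B * (-(3*Complex.I/2) * Complex.exp (-(3 * Complex.I * t / 2)))
              - (2/3 : ℂ) * conj B * (3*Complex.I/2 * Complex.exp (3 * Complex.I * t / 2))) : C3) t := by
        have b1 := ((hde (Complex.I/2) t).const_mul D).add ((hde (-(Complex.I/2)) t).const_mul E)
        have b2 := (((hde (-(Complex.I/2)) t).const_mul (-Complex.I * conj D)).add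
          ((hde (Complex.I/2) t).const_mul (Complex.I * conj E)))
        have b3 := ((((hde (-(Complex.I/2)) t).const_mul (2*A)).sub
          ((hde (Complex.I/2) t).const_mul (2*conj A))).sub
          ((hde (-(3*Complex.I/2)) t).const_mul ((2/3 : ℂ)*B))).sub
          ((hde (3*Complex.I/2) t).const_mul ((2/3 : ℂ)*conj B))
        have e1 : ∀ s : ℝ, Complex.I/2 * (s:ℂ) = Complex.I * s / 2 := fun s => by ring
        have e2 : ∀ s : ℝ, -(Complex.I/2) * (s:ℂ) = -(Complex.I * s / 2) := fun s => by ring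
        have e3 : ∀ s : ℝ, 3*Complex.I/2 * (s:ℂ) = 3 * Complex.I * s / 2 := fun s => by ring
        have e4 : ∀ s : ℝ, -(3*Complex.I/2) * (s:ℂ) = -(3 * Complex.I * s / 2) := fun s => by ring
        simp only [e1, e2, e3, e4] at b1 b2 b3
        exact HasDerivAt.prodMk b1 (HasDerivAt.prodMk b2 b3)
      have heq : (cross3 (z12 t) (z5c A B t) + cross3 (z12 t) (z5c A B t)
          - cross3 (z3c t) (z4c A B D E t) : C3)
          = (D * (Complex.I/2 * Complex.exp (Complex.I * t / 2))
              + E * (-(Complex.I/2) * Complex.exp (-(Complex.I * t / 2))),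
            -Complex.I * conj D * (-(Complex.I/2) * Complex.exp (-(Complex.I * t / 2)))
              + Complex.I * conj E * (Complex.I/2 * Complex.exp (Complex.I * t / 2)),
            2 * A * (-(Complex.I/2) * Complex.exp (-(Complex.I * t / 2)))
              - 2 * conj A * (Complex.I/2 * Complex.exp (Complex.I * t / 2))
              - (2/3 : ℂ) * B * (-(3*Complex.I/2) * Complex.exp (-(3 * Complex.I * t / 2)))
              - (2/3 : ℂ) * conj B * (3*Complex.I/2 * Complex.exp (3 * Complex.I * t / 2))) := by
        refine Prod.ext ?_ (Prod.ext ?_ ?_) <;>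
          simp only [cross3, z12, z3c, z4c, z5c, Prod.mk_add_mk, Prod.mk_sub_mk, Prod.fst_add,
            Prod.snd_add, Prod.fst_sub, Prod.snd_sub, map_sub, map_add, map_mul, map_neg,
            Complex.conj_conj, Complex.conj_I, map_zero, map_one, hce t, hcf t, map_ofNat,
            map_div₀, h2 t, h2' t, h3 t, h3' t] <;>
          set e := Complex.exp (Complex.I * t / 2) with hE <;>
          set f := Complex.exp (-(Complex.I * t / 2)) with hF <;>
          have hEF : e * f = 1 := hef t <;>
          first
            | ring1
            | linear_combination (-(1/2 : ℂ) * (f * conj D + e * conj E)) * Complex.I_sq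
            | linear_combination ((1/2 : ℂ) * (f * conj D + e * conj E)) * Complex.I_sq
            | linear_combination (-(Complex.I * e * conj A) - Complex.I * f * A) * hEF
            | linear_combination (Complex.I * e * conj A + Complex.I * f * A) * hEF
      rw [heq]; exact d4
    · have d5 : HasDerivAt (z5c A B)
          ((A * (Complex.I/2 * Complex.exp (Complex.I * t / 2))
              + B * (-(Complex.I/2) * Complex.exp (-(Complex.I * t / 2))),
            Complex.I * conj A * (-(Complex.I/2) * Complex.exp (-(Complex.I * t / 2)))
              - Complex.I * conj B * (Complex.I/2 * Complex.exp (Complex.I * t / 2)),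
            0) : C3) t := by
        have b1 := ((hde (Complex.I/2) t).const_mul A).add ((hde (-(Complex.I/2)) t).const_mul B)
        have b2 := (((hde (-(Complex.I/2)) t).const_mul (Complex.I * conj A)).sub
          ((hde (Complex.I/2) t).const_mul (Complex.I * conj B)))
        have e1 : ∀ s : ℝ, Complex.I/2 * (s:ℂ) = Complex.I * s / 2 := fun s => by ring
        have e2 : ∀ s : ℝ, -(Complex.I/2) * (s:ℂ) = -(Complex.I * s / 2) := fun s => by ring
        simp only [e1, e2] at b1 b2
        exact HasDerivAt.prodMk b1 (HasDerivAt.prodMk b2 (hasDerivAt_const t (0:ℂ)))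
      have heq : (-cross3 (z12 t) (z4c A B D E t) + cross3 (z12 t) (z4c A B D E t)
          + cross3 (z3c t) (z5c A B t) : C3)
          = (A * (Complex.I/2 * Complex.exp (Complex.I * t / 2))
              + B * (-(Complex.I/2) * Complex.exp (-(Complex.I * t / 2))),
            Complex.I * conj A * (-(Complex.I/2) * Complex.exp (-(Complex.I * t / 2)))
              - Complex.I * conj B * (Complex.I/2 * Complex.exp (Complex.I * t / 2)),
            0) := by
        refine Prod.ext ?_ (Prod.ext ?_ ?_) <;>
          simp only [cross3, z12, z3c, z4c, z5c, Prod.mk_add_mk, Prod.neg_mk, Prod.fst_add,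
            Prod.snd_add, Prod.fst_neg, Prod.snd_neg, map_sub, map_add, map_mul, map_neg,
            Complex.conj_conj, Complex.conj_I, map_zero, map_one, hce t, hcf t, map_ofNat,
            map_div₀, h2 t, h2' t, h3 t, h3' t] <;>
          set e := Complex.exp (Complex.I * t / 2) with hE <;>
          set f := Complex.exp (-(Complex.I * t / 2)) with hF <;>
          have hEF : e * f = 1 := hef t <;>
          first
            | ring1
            | linear_combination ((1/2 : ℂ) * (f * conj A + e * conj B)) * Complex.I_sq
            | linear_combination (-(1/2 : ℂ) * (f * conj A + e * conj B)) * Complex.I_sq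
      rw [heq]; exact d5
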